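/- arXiv:2102.07240 — 3 statements merged into one kernel-verified Lean document; each statement's English description precedes it below -/
import Mathlib

section
/- Let n = 5f−1 with f ≥ 1. If at least 3f−1 honest parties each vote for the same value v (and honest parties vote for at most one value), then any multiset of 4f−1 signed vote/timeout messages from distinct parties contains at most 2f messages whose value differs from v (counting ⊥ messages as differing). -/
/-- With `n = 5f−1` parties: if at least `3f−1` honest parties each send a message
with value `v`, then any set of `4f−1` messages from distinct parties contains at
most `2f` messages whose value differs from `v` (with `none` modeling `⊥`). -/
theorem at_most_2f_conflicting_messages (f : ℕ) (hf : f ≥ 1)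
    (α : Type*) [Fintype α] [DecidableEq α] (hcard : Fintype.card α = 5 * f - 1)
    (Value : Type*) [DecidableEq Value] (v : Value)
    (Honest : Finset α) (hHonest : Honest.card = 4 * f - 1)
    (Byz : Finset α) (hByz : Byz = Finset.univ \ Honest) (hByzcard : Byz.card ≤ f)
    (msgval : α → Option Value)
    (V : Finset α) (hVH : V ⊆ Honest) (hV : V.card ≥ 3 * f - 1)
    (hvote : ∀ p ∈ V, msgval p = some v)
    (M : Finset α) (hM : M.card = 4 * f - 1) :
    (M.filter (fun p => msgval p ≠ some v)).card ≤ 2 * f := by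
  have hsub : M.filter (fun p => msgval p ≠ some v) ⊆ M \ V := by
    intro p hp
    simp only [Finset.mem_filter] at hp
    refine Finset.mem_sdiff.mpr ⟨hp.1, fun hpV => hp.2 (hvote p hpV)⟩
  have h1 : (M.filter (fun p => msgval p ≠ some v)).card ≤ (M \ V).card :=
    Finset.card_le_card hsub
  have h2 : (M \ V).card + (M ∩ V).card = M.card := Finset.card_sdiff_add_card_inter M V
  have h3 : (M ∪ V).card + (M ∩ V).card = M.card + V.card :=
    Finset.card_union_add_card_inter M V
  have h4 : (M ∪ V).card ≤ Fintype.card α := Finset.card_le_univ _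
  omega
end

section
/- In the (Δ+1.5δ)-BB protocol, if the broadcaster is honest, sends its proposal at global time 0, every honest party receives it by global time δ ≤ Δ, honest parties vote with parameter d = δ at local time t_prop + Δ − 0.5δ, and vote messages are delivered within δ, then every honest party receives f+1 matching votes by global time Δ + 1.5δ, and at each honest party the elapsed local time between receiving the proposal and receiving the votes is at most Δ + 1.5δ, satisfying the commit condition t_votes − t_prop ≤ Δ + 1.5d. -/
/-- Good-case latency of the (Δ+1.5δ)-BB protocol: with an honest broadcaster sending
at global time 0, proposals delivered by `δ ≤ Δ`, honest parties voting with parameter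
`d = δ` at local time `t_prop + Δ − 0.5δ`, and votes delivered within `δ`, every honest
party receives the `≥ f+1` honest votes by global time `Δ + 1.5δ`, and the elapsed time
between its proposal receipt and the votes' arrival is at most `Δ + 1.5δ`. -/
theorem good_case_latency_bb3 (n f : ℕ) (hnf : 2 * f < n)
    (δ Δ : ℝ) (hδ : 0 ≤ δ) (hδΔ : δ ≤ Δ)
    (α : Type*) [Fintype α] [DecidableEq α] (hcard : Fintype.card α = n)
    (H : Finset α) (hH : H.card ≥ n - f)
    (recvProp : α → ℝ)
    (hrecv : ∀ p ∈ H, 0 ≤ recvProp p ∧ recvProp p ≤ δ)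
    (arrive : α → α → ℝ)  -- `arrive p q`: global time q receives p's vote
    (harrive : ∀ p ∈ H, ∀ q ∈ H,
      recvProp p + Δ - δ / 2 ≤ arrive p q ∧ arrive p q ≤ (recvProp p + Δ - δ / 2) + δ) :
    H.card ≥ f + 1 ∧
    ∀ p ∈ H, ∀ q ∈ H,
      arrive p q ≤ Δ + 3 * δ / 2 ∧
      arrive p q - recvProp q ≤ Δ + 3 * δ / 2 := by
  constructor
  · omega
  · intro p hp q hq
    obtain ⟨hp0, hpδ⟩ := hrecv p hp
    obtain ⟨hq0, _⟩ := hrecv q hq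
    obtain ⟨_, h2⟩ := harrive p hp q hq
    constructor <;> nlinarith
end

section
/- In the 2-round asynchronous BRB protocol with n ≥ 3f+1: if the broadcaster is honest with input v, then at least n−f honest parties vote for v, n−f > f so no value v′ ≠ v can gather n−f votes, and every honest party commits v; formally, any set of n−f votes must contain at least n−2f ≥ f+1 honest votes, and since honest parties only vote v, all n−f-sized vote sets are for v. -/
/-- Validity of the 2-round asynchronous BRB protocol with `n ≥ 3f+1`: if every
honest party (there are at least `n−f` of them) votes the honest broadcaster's
value `v`, then `n − f ≥ 2f + 1 > f`, any set of `n−f` votes from distinct parties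
for a single value `w` contains at least `n − 2f ≥ f+1` honest votes, and hence
`w = v`. -/
theorem brb_validity (n f : ℕ) (hn : n ≥ 3 * f + 1)
    (α : Type*) [Fintype α] [DecidableEq α] (hcard : Fintype.card α = n)
    (Value : Type*) (v : Value)
    (Byz : Finset α) (hByz : Byz.card ≤ f)
    (vote : α → Option Value)
    (honest_vote : ∀ p, p ∉ Byz → vote p = some v) :
    (Finset.univ \ Byz).card ≥ n - f ∧
    n - f ≥ 2 * f + 1 ∧ n - f > f ∧
    (∀ (w : Value) (S : Finset α), S.card = n - f →
      (∀ p ∈ S, vote p = some w) →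
      (S.filter (fun p => p ∉ Byz)).card ≥ n - 2 * f ∧ w = v) := by
  have h1 : (Finset.univ \ Byz).card ≥ n - f := by
    have h := Finset.card_sdiff_of_subset (Finset.subset_univ Byz)
    rw [h, Finset.card_univ, hcard]
    omega
  refine ⟨h1, by omega, by omega, ?_⟩
  intro w S hS hvote
  have hfilter : (S.filter (fun p => p ∉ Byz)).card ≥ n - 2 * f := by
    have : S.filter (fun p => p ∈ Byz) ∪ S.filter (fun p => p ∉ Byz) = S :=
      Finset.filter_union_filter_not_eq _ S
    have hle : (S.filter (fun p => p ∈ Byz)).card ≤ f :=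
      le_trans (Finset.card_le_card (Finset.filter_subset_filter _ (Finset.subset_univ S) |>.trans (by simp))) hByz
    have hsum : (S.filter (fun p => p ∈ Byz)).card + (S.filter (fun p => p ∉ Byz)).card = S.card :=
      Finset.card_filter_add_card_filter_not _
    omega
  refine ⟨hfilter, ?_⟩
  have hpos : 0 < (S.filter (fun p => p ∉ Byz)).card := by omega
  obtain ⟨p, hp⟩ := Finset.card_pos.mp hpos
  rw [Finset.mem_filter] at hp
  have := honest_vote p hp.2
  have := hvote p hp.1
  simp_all
end
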